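/- With the same setup as the monotonicity lemma (f, G, Δ, h as defined from γ₊ ≥ 0, γ₋ > 0, μ ∈ ℝ, and (z_n) a sequence in (0,1) satisfying the recursion (n+2)(f(z_{n+1}) − f(z_n)) = n(G(z_n) − G(z_{n−1})) + Δ(z_n) for n ≥ 1 and 2(f(z_1)−f(z_0)) = Δ(z_0)): if h(z_0) < γ₋ − γ₊ − μ, then (z_n) is strictly decreasing: z_0 > z_1 > z_2 > ... > 0. -/

import Mathlib

noncomputable def f (γp γm x : ℝ) : ℝ := γm * x + γp * Real.log x
noncomputable def G (γp γm x : ℝ) : ℝ := γm * Real.log x - γp / x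
noncomputable def Δ (γp γm μ x : ℝ) : ℝ :=
  γp + γm - γp / x - γm * x + (γm - γp - μ) * Real.log x
noncomputable def h (γp γm x : ℝ) : ℝ := (γm * x + γp / x - (γp + γm)) / Real.log x

section aux

variable {γp γm μ : ℝ}

lemma f_lt (hγp : 0 ≤ γp) (hγm : 0 < γm) {a b : ℝ} (ha : 0 < a) (hab : a < b) :
    f γp γm a < f γp γm b := by
  have h1 : γm * a < γm * b := by nlinarith
  have h2 : γp * Real.log a ≤ γp * Real.log b :=
    mul_le_mul_of_nonneg_left (Real.log_le_log ha hab.le) hγp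
  unfold f; linarith

lemma lt_of_f_lt (hγp : 0 ≤ γp) (hγm : 0 < γm) {a b : ℝ} (ha : 0 < a) (hb : 0 < b)
    (hf : f γp γm a < f γp γm b) : a < b := by
  by_contra hle
  push_neg at hle
  rcases eq_or_lt_of_le hle with heq | hlt
  · rw [heq] at hf; exact lt_irrefl _ hf
  · exact absurd (f_lt hγp hγm hb hlt) (not_lt.2 hf.le)

lemma G_lt (hγp : 0 ≤ γp) (hγm : 0 < γm) {a b : ℝ} (ha : 0 < a) (hab : a < b) :
    G γp γm a < G γp γm b := by
  have h1 : γm * Real.log a < γm * Real.log b :=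
    mul_lt_mul_of_pos_left (Real.log_lt_log ha hab) hγm
  have h2 : γp / b ≤ γp / a := div_le_div_of_nonneg_left hγp ha hab.le
  unfold G; linarith

lemma delta_neg {x : ℝ} (hx : x ∈ Set.Ioo (0 : ℝ) 1)
    (hhx : h γp γm x < γm - γp - μ) : Δ γp γm μ x < 0 := by
  obtain ⟨hx0, hx1⟩ := hx
  have hL : Real.log x < 0 := Real.log_neg hx0 hx1
  rw [h, div_lt_iff_of_neg hL] at hhx
  unfold Δ
  nlinarith

lemma h_strictMonoOn (hγp : 0 ≤ γp) (hγm : 0 < γm) :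
    StrictMonoOn (h γp γm) (Set.Ioo (0 : ℝ) 1) := by
  have key : ∀ x ∈ Set.Ioo (0 : ℝ) 1, HasDerivAt (h γp γm)
      (((γm + γp * -(x ^ 2)⁻¹) * Real.log x -
        (γm * x + γp * x⁻¹ - (γp + γm)) * x⁻¹) / Real.log x ^ 2) x := by
    intro x hx
    obtain ⟨hx0, hx1⟩ := hx
    have hL : Real.log x ≠ 0 := ne_of_lt (Real.log_neg hx0 hx1)
    have hu : HasDerivAt (fun x => γm * x + γp * x⁻¹ - (γp + γm))
        (γm + γp * -(x ^ 2)⁻¹) x := by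
      have h1 : HasDerivAt (fun x : ℝ => γm * x) γm x := by
        simpa using (hasDerivAt_id x).const_mul γm
      have h2 : HasDerivAt (fun x : ℝ => γp * x⁻¹) (γp * -(x ^ 2)⁻¹) x :=
        (hasDerivAt_inv hx0.ne').const_mul γp
      simpa using (h1.add h2).sub_const (γp + γm)
    have hv : HasDerivAt Real.log x⁻¹ x := Real.hasDerivAt_log hx0.ne'
    have := hu.div hv hL
    have e : h γp γm = fun y => (γm * y + γp * y⁻¹ - (γp + γm)) / Real.log y :=
      funext fun y => by simp only [h, div_eq_mul_inv]
    rw [e]; exact this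
  have hpos : ∀ x ∈ Set.Ioo (0 : ℝ) 1, 0 < ((γm + γp * -(x ^ 2)⁻¹) * Real.log x -
      (γm * x + γp * x⁻¹ - (γp + γm)) * x⁻¹) / Real.log x ^ 2 := by
    intro x hx
    obtain ⟨hx0, hx1⟩ := hx
    have hL : Real.log x < 0 := Real.log_neg hx0 hx1
    have hL2 : 0 < Real.log x ^ 2 := pow_two_pos_of_ne_zero hL.ne
    have k2 : Real.log x < x - 1 := Real.log_lt_sub_one_of_pos hx0 hx1.ne
    have k1 : Real.log x⁻¹ < x⁻¹ - 1 :=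
      Real.log_lt_sub_one_of_pos (by positivity) (by
        simp only [ne_eq, inv_eq_one]; exact hx1.ne)
    rw [Real.log_inv] at k1
    apply div_pos _ hL2
    have heq : (γm + γp * -(x ^ 2)⁻¹) * Real.log x -
        (γm * x + γp * x⁻¹ - (γp + γm)) * x⁻¹
        = (γm * x ^ 2 * (Real.log x - 1 + x⁻¹) + γp * (x - 1 - Real.log x)) / x ^ 2 := by
      field_simp
      ring
    rw [heq]
    apply div_pos _ (by positivity)
    have t1 : 0 < γm * x ^ 2 * (Real.log x - 1 + x⁻¹) := by
      apply mul_pos (mul_pos hγm (pow_pos hx0 2)); linarith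
    have t2 : 0 ≤ γp * (x - 1 - Real.log x) := by
      apply mul_nonneg hγp; linarith
    linarith
  apply strictMonoOn_of_deriv_pos (convex_Ioo 0 1)
  · exact fun x hx => ((key x hx).differentiableAt.continuousAt).continuousWithinAt
  · intro x hx
    rw [interior_Ioo] at hx
    rw [(key x hx).deriv]
    exact hpos x hx

end aux

/-- Monotonicity lemma (strictly decreasing case): if `h(z_0) < γ₋ − γ₊ − μ`,
any solution of the Lagrange recursion with values in `(0,1)` is strictly
decreasing. -/
theorem zseq_strictAnti (γp γm μ : ℝ) (hγp : 0 ≤ γp) (hγm : 0 < γm)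
    (z : ℕ → ℝ) (hz : ∀ n, z n ∈ Set.Ioo (0 : ℝ) 1)
    (hrec0 : 2 * (f γp γm (z 1) - f γp γm (z 0)) = Δ γp γm μ (z 0))
    (hrec : ∀ n : ℕ, 1 ≤ n →
      ((n : ℝ) + 2) * (f γp γm (z (n + 1)) - f γp γm (z n))
        = (n : ℝ) * (G γp γm (z n) - G γp γm (z (n - 1))) + Δ γp γm μ (z n))
    (hh : h γp γm (z 0) < γm - γp - μ) :
    StrictAnti z := by
  have key : ∀ n : ℕ, z (n + 1) < z n ∧ z (n + 1) < z 0 := by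
    intro n
    induction n with
    | zero =>
      have hΔ : Δ γp γm μ (z 0) < 0 := delta_neg (hz 0) hh
      have hf : f γp γm (z 1) < f γp γm (z 0) := by linarith
      have := lt_of_f_lt hγp hγm (hz 1).1 (hz 0).1 hf
      exact ⟨this, this⟩
    | succ n ih =>
      obtain ⟨ih1, ih2⟩ := ih
      have hΔ : Δ γp γm μ (z (n + 1)) < 0 := by
        apply delta_neg (hz (n + 1))
        calc h γp γm (z (n + 1)) < h γp γm (z 0) :=
              h_strictMonoOn hγp hγm (hz (n + 1)) (hz 0) ih2
          _ < γm - γp - μ := hh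
      have hG : G γp γm (z (n + 1)) < G γp γm (z n) := G_lt hγp hγm (hz (n + 1)).1 ih1
      have hr := hrec (n + 1) (by omega)
      simp only [Nat.add_sub_cancel] at hr
      have hn : (0 : ℝ) < (n : ℝ) + 1 := by positivity
      have hlhs : ((n : ℝ) + 1 + 2) * (f γp γm (z (n + 2)) - f γp γm (z (n + 1))) < 0 := by
        push_cast at hr
        rw [hr]
        nlinarith
      have hf : f γp γm (z (n + 2)) < f γp γm (z (n + 1)) := by nlinarith
      have h1 := lt_of_f_lt hγp hγm (hz (n + 2)).1 (hz (n + 1)).1 hf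
      exact ⟨h1, h1.trans ih2⟩
  exact strictAnti_nat_of_succ_lt fun n => (key n).1
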